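/- arXiv:1908.07380 — 3 statements merged into one kernel-verified Lean document; each statement's English description precedes it below -/
import Mathlib

section
/- Let 0 ≤ q̂ ≤ q < 1 and let c ≥ 0. If kl(q̂ ‖ q) ≤ c, then q - q̂ ≤ √(2·q·c), where kl(q̂ ‖ q) = q̂·log(q̂/q) + (1-q̂)·log((1-q̂)/(1-q)) is the binary Kullback-Leibler divergence between Bernoulli distributions with parameters q̂ and q (with the convention 0·log 0 = 0). -/
/-- Binary Kullback-Leibler divergence between Bernoulli parameters `p` and `q`:
`kl(p ‖ q) = p·log(p/q) + (1-p)·log((1-p)/(1-q))`. Note that the convention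
`0·log 0 = 0` holds automatically since in Lean `Real.log 0 = 0` and `0 * x = 0`. -/
noncomputable def klBin (p q : ℝ) : ℝ :=
  p * Real.log (p / q) + (1 - p) * Real.log ((1 - p) / (1 - q))

open Real in
/-- Auxiliary function: expanded KL minus the quadratic lower bound. -/
noncomputable def klAuxG (q p : ℝ) : ℝ :=
  p * log p - p * log q + (1 - p) * log (1 - p)
    - (1 - p) * log (1 - q) - (q - p) ^ 2 / (2 * q)

open Real in
lemma klAuxG_hasDerivAt (q p : ℝ) (hp : 0 < p) (hp1 : p < 1) :
    HasDerivAt (klAuxG q)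
      (log p - log q - log (1 - p) + log (1 - q) + (q - p) / q) p := by
  have h1 : HasDerivAt (fun x : ℝ => x * log x) (log p + 1) p :=
    Real.hasDerivAt_mul_log hp.ne'
  have h2 : HasDerivAt (fun x : ℝ => x * log q) (log q) p := by
    simpa using (hasDerivAt_id p).mul_const (log q)
  have hsub : HasDerivAt (fun x : ℝ => 1 - x) (-1 : ℝ) p := by
    simpa using (hasDerivAt_id' p).const_sub (1:ℝ)
  have h3 : HasDerivAt (fun x : ℝ => (1 - x) * log (1 - x))
      ((log (1 - p) + 1) * (-1)) p :=
    (Real.hasDerivAt_mul_log (by linarith : (1:ℝ) - p ≠ 0)).comp p hsub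
  have h4 : HasDerivAt (fun x : ℝ => (1 - x) * log (1 - q)) (-log (1 - q)) p := by
    simpa using hsub.mul_const (log (1 - q))
  have h5 : HasDerivAt (fun x : ℝ => (q - x) ^ 2 / (2 * q))
      ((2 * (q - p) * (-1)) / (2 * q)) p := by
    have : HasDerivAt (fun x : ℝ => q - x) (-1 : ℝ) p := by
      simpa using (hasDerivAt_id' p).const_sub q
    simpa using ((this.pow 2).div_const (2 * q))
  rcases eq_or_ne q 0 with hq0 | hq0
  · subst hq0
    convert ((((h1.sub h2).add h3).sub h4).sub h5) using 1
    · rfl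
    · rfl
    · funext x; rfl
    simp
    ring
  · convert ((((h1.sub h2).add h3).sub h4).sub h5) using 1
    · rfl
    · rfl
    · funext x; rfl
    field_simp
    ring

open Real in
/-- Binary KL inversion (Pinsker-type step): if `0 ≤ q̂ ≤ q < 1`, `c ≥ 0` and
`kl(q̂ ‖ q) ≤ c`, then `q - q̂ ≤ √(2·q·c)`. -/
theorem binary_kl_inversion_sqrt (qhat q c : ℝ)
    (hqhat : 0 ≤ qhat) (hle : qhat ≤ q) (hq1 : q < 1) (hc : 0 ≤ c)
    (h : klBin qhat q ≤ c) :
    q - qhat ≤ Real.sqrt (2 * q * c) := by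
  rcases eq_or_lt_of_le (hqhat.trans hle) with hq0 | hq0
  · have h1 : qhat = 0 := le_antisymm (hle.trans hq0.symm.le) hqhat
    rw [h1, ← hq0]
    simpa using Real.sqrt_nonneg 0
  -- q > 0
  have hG : AntitoneOn (klAuxG q) (Set.Icc 0 q) := by
    have hcont : Continuous (klAuxG q) := by
      unfold klAuxG
      exact (((Real.continuous_mul_log.sub (continuous_id.mul continuous_const)).add
        (Real.continuous_mul_log.comp (continuous_const.sub continuous_id))).sub
        ((continuous_const.sub continuous_id).mul continuous_const)).sub
        (((continuous_const.sub continuous_id).pow 2).div_const _)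
    apply antitoneOn_of_deriv_nonpos (convex_Icc 0 q) hcont.continuousOn
    · intro x hx
      rw [interior_Icc] at hx
      obtain ⟨hx0, hxq⟩ := hx
      exact (klAuxG_hasDerivAt q x hx0 (hxq.trans hq1)).differentiableAt.differentiableWithinAt
    · intro x hx
      rw [interior_Icc] at hx
      obtain ⟨hx0, hxq⟩ := hx
      have hx1 : x < 1 := hxq.trans hq1
      rw [(klAuxG_hasDerivAt q x hx0 hx1).deriv]
      have e1 : log x - log q ≤ x / q - 1 := by
        rw [← Real.log_div hx0.ne' hq0.ne']
        exact (Real.log_le_sub_one_of_pos (by positivity)).trans (le_refl _)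
      have e2 : log (1 - q) ≤ log (1 - x) :=
        Real.log_le_log (by linarith) (by linarith)
      have e3 : (q - x) / q = 1 - x / q := by field_simp
      linarith [e1, e2, e3.le]
  have hGq : klAuxG q q = 0 := by
    unfold klAuxG; ring_nf
  have hGqhat : klAuxG q qhat = klBin qhat q - (q - qhat) ^ 2 / (2 * q) := by
    unfold klAuxG klBin
    rcases eq_or_lt_of_le hqhat with h0 | h0
    · rw [← h0]
      simp [Real.log_div one_ne_zero (by linarith : (1:ℝ) - q ≠ 0)]
      try ring
    · rw [Real.log_div h0.ne' hq0.ne',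
        Real.log_div (by linarith : (1:ℝ) - qhat ≠ 0) (by linarith : (1:ℝ) - q ≠ 0)]
      ring
  have key : 0 ≤ klAuxG q qhat := by
    have := hG (Set.mem_Icc.mpr ⟨hqhat, hle⟩) (Set.mem_Icc.mpr ⟨hq0.le, le_refl q⟩) hle
    rw [hGq] at this
    exact this
  have hsq : (q - qhat) ^ 2 ≤ 2 * q * c := by
    rw [hGqhat] at key
    have : (q - qhat) ^ 2 / (2 * q) ≤ c := by linarith
    calc (q - qhat) ^ 2 = ((q - qhat) ^ 2 / (2 * q)) * (2 * q) := by field_simp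
    _ ≤ c * (2 * q) := by nlinarith
    _ = 2 * q * c := by ring
  have := Real.sqrt_le_sqrt hsq
  calc q - qhat = Real.sqrt ((q - qhat) ^ 2) := (Real.sqrt_sq (by linarith)).symm
  _ ≤ Real.sqrt (2 * q * c) := this
end

section
/- Let 0 ≤ q̂ ≤ q < 1 and let c ≥ 0. If kl(q̂ ‖ q) ≤ c, then q ≤ ( √( q̂ + c/2 ) + √( c/2 ) )², where kl(q̂ ‖ q) = q̂·log(q̂/q) + (1-q̂)·log((1-q̂)/(1-q)) is the binary Kullback-Leibler divergence between Bernoulli distributions with parameters q̂ and q (with the convention 0·log 0 = 0). -/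
noncomputable def gAux (p y : ℝ) : ℝ :=
  p * Real.log p - p * Real.log y + (1 - p) * Real.log (1 - p)
    - (1 - p) * Real.log (1 - y) - (y - p) ^ 2 / (2 * y)

lemma gAux_hasDerivAt (p y : ℝ) (hy : 0 < y) (hy1 : y < 1) :
    HasDerivAt (gAux p)
      (-(p * y⁻¹) - (1 - p) * ((1 - y)⁻¹ * (-1))
        - (2 * (y - p) * (2 * y) - (y - p) ^ 2 * 2) / (2 * y) ^ 2) y := by
  have h1 : HasDerivAt (fun y : ℝ => p * Real.log y) (p * y⁻¹) y :=
    (Real.hasDerivAt_log hy.ne').const_mul p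
  have h2 : HasDerivAt (fun y : ℝ => Real.log (1 - y)) ((1 - y)⁻¹ * (-1)) y := by
    have hlin : HasDerivAt (fun y : ℝ => 1 - y) (-1) y := by
      simpa using (hasDerivAt_id y).const_sub 1
    exact (Real.hasDerivAt_log (by intro hh; rw [sub_eq_zero] at hh; linarith)).comp y hlin
  have h3 : HasDerivAt (fun y : ℝ => (y - p) ^ 2 / (2 * y))
      ((2 * (y - p) * (2 * y) - (y - p) ^ 2 * 2) / (2 * y) ^ 2) y := by
    have hnum : HasDerivAt (fun y : ℝ => (y - p) ^ 2) (2 * (y - p)) y := by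
      have h0 : HasDerivAt (fun y : ℝ => y - p) 1 y := (hasDerivAt_id y).sub_const p
      simpa using h0.fun_pow 2
    have hden : HasDerivAt (fun y : ℝ => 2 * y) 2 y := by
      simpa using (hasDerivAt_id y).const_mul (2:ℝ)
    exact hnum.div hden (by positivity)
  have H := (((h1.const_sub (p * Real.log p)).add_const
      ((1 - p) * Real.log (1 - p))).sub (h2.const_mul (1 - p))).sub h3
  exact H

lemma key (p x : ℝ) (hp : 0 < p) (hpx : p ≤ x) (hx1 : x < 1) :
    (x - p) ^ 2 / (2 * x) ≤ klBin p x := by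
  have hx0 : 0 < x := lt_of_lt_of_le hp hpx
  have hmem : ∀ y ∈ Set.Icc p x, 0 < y ∧ y < 1 := by
    intro y hy
    exact ⟨lt_of_lt_of_le hp hy.1, lt_of_le_of_lt hy.2 hx1⟩
  have hmono : MonotoneOn (gAux p) (Set.Icc p x) := by
    apply monotoneOn_of_deriv_nonneg (convex_Icc p x)
    · intro y hy
      obtain ⟨h0, h1⟩ := hmem y hy
      exact (gAux_hasDerivAt p y h0 h1).continuousAt.continuousWithinAt
    · intro y hy
      rw [interior_Icc] at hy
      obtain ⟨h0, h1⟩ := hmem y ⟨hy.1.le, hy.2.le⟩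
      exact (gAux_hasDerivAt p y h0 h1).differentiableAt.differentiableWithinAt
    · intro y hy
      rw [interior_Icc] at hy
      obtain ⟨h0, h1⟩ := hmem y ⟨hy.1.le, hy.2.le⟩
      rw [(gAux_hasDerivAt p y h0 h1).deriv]
      have hpy : p < y := hy.1
      rw [← sub_nonneg]
      have key2 : -(p * y⁻¹) - (1 - p) * ((1 - y)⁻¹ * (-1))
          - (2 * (y - p) * (2 * y) - (y - p) ^ 2 * 2) / (2 * y) ^ 2 - 0
          = ((y - p) * (2 * y - (1 - y) * (y + p))) / (2 * y ^ 2 * (1 - y)) := by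
        have a1 : y ≠ 0 := h0.ne'
        have a2 : (1:ℝ) - y ≠ 0 := by intro hh; rw [sub_eq_zero] at hh; linarith
        field_simp
        ring
      rw [key2]
      apply div_nonneg
      · have : (1 - y) * (y + p) ≤ 2 * y := by nlinarith
        nlinarith
      · nlinarith
  have hgp : gAux p p = 0 := by
    unfold gAux; ring
  have hgx : gAux p x ≤ klBin p x - (x - p) ^ 2 / (2 * x) := by
    unfold gAux klBin
    rw [Real.log_div hp.ne' hx0.ne', Real.log_div (by linarith) (by intro hh; rw [sub_eq_zero] at hh; linarith)]
    ring_nf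
    exact le_refl _
  have := hmono (Set.left_mem_Icc.mpr hpx) (Set.right_mem_Icc.mpr hpx) hpx
  rw [hgp] at this
  linarith


/-- Full binary KL inversion: if `0 ≤ q̂ ≤ q < 1`, `c ≥ 0` and `kl(q̂ ‖ q) ≤ c`,
then `q ≤ (√(q̂ + c/2) + √(c/2))²`. -/
theorem binary_kl_inversion_quadratic (qhat q c : ℝ)
    (hqhat : 0 ≤ qhat) (hle : qhat ≤ q) (hq1 : q < 1) (hc : 0 ≤ c)
    (h : klBin qhat q ≤ c) :
    q ≤ (Real.sqrt (qhat + c / 2) + Real.sqrt (c / 2)) ^ 2 := by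
  have hB1 := Real.sqrt_nonneg (qhat + c / 2)
  have hB2 := Real.sqrt_nonneg (c / 2)
  have hs1 : Real.sqrt (qhat + c / 2) ^ 2 = qhat + c / 2 :=
    Real.sq_sqrt (by linarith)
  have hs2 : Real.sqrt (c / 2) ^ 2 = c / 2 := Real.sq_sqrt (by linarith)
  -- reduce to the Pinsker-type bound
  have hkey : (q - qhat) ^ 2 ≤ 2 * q * c := by
    rcases eq_or_lt_of_le hle with rfl | hlt
    · nlinarith
    rcases eq_or_lt_of_le hqhat with rfl | hp0
    · -- qhat = 0 case
      have hkl : klBin 0 q = -Real.log (1 - q) := by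
        norm_num [klBin, one_div, Real.log_inv]
      have hlog : Real.log (1 - q) ≤ (1 - q) - 1 :=
        Real.log_le_sub_one_of_pos (by linarith)
      rw [hkl] at h
      nlinarith
    · have := key qhat q hp0 hle hq1
      have h2 : (q - qhat) ^ 2 / (2 * q) ≤ c := le_trans this h
      have hq0 : 0 < q := lt_of_lt_of_le hp0 hle
      rw [div_le_iff₀ (by positivity)] at h2
      nlinarith
  -- now solve the quadratic
  have hq0 : 0 ≤ q := le_trans hqhat hle
  set s := Real.sqrt q with hs
  have hss : s ^ 2 = q := Real.sq_sqrt hq0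
  have hsn : 0 ≤ s := Real.sqrt_nonneg q
  have h2cq : q - qhat ≤ 2 * Real.sqrt (c / 2) * s := by
    have h4 : (2 * Real.sqrt (c / 2) * s) ^ 2 = 2 * q * c := by
      rw [mul_pow, mul_pow, hs2, hss]; ring
    nlinarith [mul_nonneg (mul_nonneg (by norm_num : (0:ℝ) ≤ 2) hB2) hsn]
  have hsq : (s - Real.sqrt (c / 2)) ^ 2 ≤ qhat + c / 2 := by nlinarith
  have habs : s - Real.sqrt (c / 2) ≤ Real.sqrt (qhat + c / 2) := by
    calc s - Real.sqrt (c / 2) ≤ |s - Real.sqrt (c / 2)| := le_abs_self _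
    _ = Real.sqrt ((s - Real.sqrt (c / 2)) ^ 2) := (Real.sqrt_sq_eq_abs _).symm
    _ ≤ Real.sqrt (qhat + c / 2) := Real.sqrt_le_sqrt hsq
  have hsB : s ≤ Real.sqrt (qhat + c / 2) + Real.sqrt (c / 2) := by linarith
  calc q = s ^ 2 := hss.symm
  _ ≤ (Real.sqrt (qhat + c / 2) + Real.sqrt (c / 2)) ^ 2 := by nlinarith
end

section
/- Let 0 ≤ q̂ ≤ q < 1 and let c ≥ 0. If kl(q̂ ‖ q) ≤ c, then for every λ ∈ (0,2) one has q ≤ q̂/(1 - λ/2) + c/(λ·(1 - λ/2)), where kl(q̂ ‖ q) = q̂·log(q̂/q) + (1-q̂)·log((1-q̂)/(1-q)) is the binary Kullback-Leibler divergence between Bernoulli distributions with parameters q̂ and q (with the convention 0·log 0 = 0). -/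
private lemma kl_lower (p q : ℝ) (hp : 0 ≤ p) (hpq : p ≤ q) (hq1 : q < 1) :
    (q - p) ^ 2 ≤ 2 * q * klBin p q := by
  rcases eq_or_lt_of_le hp with hp0 | hp0
  · -- p = 0 : klBin 0 q = -log(1-q) ≥ q
    subst hp0
    simp only [klBin, sub_zero, one_mul, zero_mul, zero_add, Real.log_div one_ne_zero
      (by linarith : (1:ℝ) - q ≠ 0), Real.log_one, zero_sub]
    have hlog : Real.log (1 - q) ≤ -q := by
      have := Real.log_le_sub_one_of_pos (by linarith : (0:ℝ) < 1 - q)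
      linarith
    nlinarith
  · -- p > 0, hence 0 < p ≤ q < 1
    have hq0 : 0 < q := lt_of_lt_of_le hp0 hpq
    have hp1 : p < 1 := lt_of_le_of_lt hpq hq1
    set g : ℝ → ℝ := fun t => p * Real.log p - p * Real.log t
      + (1 - p) * Real.log (1 - p) - (1 - p) * Real.log (1 - t) - (t - p) ^ 2 / (2 * q)
      with hg
    have hderiv : ∀ t ∈ Set.Icc p q, HasDerivAt g
        (-(p / t) + (1 - p) / (1 - t) - (t - p) / q) t := by
      intro t ht
      obtain ⟨ht1, ht2⟩ := ht
      have ht0 : 0 < t := lt_of_lt_of_le hp0 ht1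
      have ht3 : t < 1 := lt_of_le_of_lt ht2 hq1
      have d1 : HasDerivAt (fun t => p * Real.log t) (p / t) t := by
        simpa [div_eq_mul_inv, mul_comm] using (Real.hasDerivAt_log ht0.ne').const_mul p
      have d2 : HasDerivAt (fun t : ℝ => (1 - p) * Real.log (1 - t))
          ((1 - p) * (-(1 / (1 - t)))) t := by
        have hlin : HasDerivAt (fun t : ℝ => 1 - t) (-1) t := by
          simpa using (hasDerivAt_id t).const_sub 1
        have := (Real.hasDerivAt_log (by linarith : (1:ℝ) - t ≠ 0)).comp t hlin
        simpa [div_eq_mul_inv] using this.const_mul (1 - p)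
      have d3 : HasDerivAt (fun t : ℝ => (t - p) ^ 2 / (2 * q))
          (2 * (t - p) / (2 * q)) t := by
        have hlin : HasDerivAt (fun t : ℝ => t - p) 1 t := (hasDerivAt_id t).sub_const p
        have := (hlin.pow 2).div_const (2 * q)
        simpa [mul_comm, mul_assoc] using this
      have := ((((hasDerivAt_const t (p * Real.log p)).sub d1).add_const
        ((1 - p) * Real.log (1 - p))).sub d2).sub d3
      refine this.congr_deriv ?_
      ring
    have hmono : MonotoneOn g (Set.Icc p q) := by
      apply monotoneOn_of_deriv_nonneg (convex_Icc p q)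
      · intro t ht
        exact ((hderiv t ht).differentiableAt).continuousAt.continuousWithinAt
      · intro t ht
        rw [interior_Icc] at ht
        exact ((hderiv t ⟨ht.1.le, ht.2.le⟩).differentiableAt).differentiableWithinAt
      · intro t ht
        rw [interior_Icc] at ht
        have ht0 : 0 < t := lt_of_lt_of_le hp0 ht.1.le
        have ht3 : t < 1 := lt_trans ht.2 hq1
        rw [(hderiv t ⟨ht.1.le, ht.2.le⟩).deriv]
        have key : -(p / t) + (1 - p) / (1 - t) - (t - p) / q
            = (t - p) * (q - t * (1 - t)) / (t * (1 - t) * q) := by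
          have hne : t * (1 - t) * q ≠ 0 := mul_ne_zero (mul_ne_zero ht0.ne' (sub_ne_zero.mpr ht3.ne')) hq0.ne'
          rw [eq_div_iff hne]
          field_simp [ht0.ne', hq0.ne', sub_ne_zero.mpr ht3.ne']
          ring
        rw [key]
        apply div_nonneg
        · apply mul_nonneg (by linarith [ht.1])
          nlinarith [ht.2.le]
        · exact (mul_pos (mul_pos ht0 (by linarith)) hq0).le
    have hgp : g p = 0 := by simp [hg]
    have hgq : klBin p q = g q + (q - p) ^ 2 / (2 * q) := by
      rw [klBin, hg]
      rw [Real.log_div hp0.ne' hq0.ne', Real.log_div (by linarith : (1:ℝ) - p ≠ 0)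
        (by linarith : (1:ℝ) - q ≠ 0)]
      ring
    have := hmono (Set.left_mem_Icc.2 hpq) (Set.right_mem_Icc.2 hpq) hpq
    rw [hgp] at this
    rw [hgq]
    have h2 : 2 * q * (g q + (q - p) ^ 2 / (2 * q)) = 2 * q * g q + (q - p) ^ 2 := by
      field_simp
    rw [h2]
    nlinarith [mul_nonneg hq0.le this]

/-- Binary KL inversion, lambda form: if `0 ≤ q̂ ≤ q < 1`, `c ≥ 0` and
`kl(q̂ ‖ q) ≤ c`, then for every `λ ∈ (0,2)`,
`q ≤ q̂/(1 - λ/2) + c/(λ·(1 - λ/2))`. -/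
theorem binary_kl_inversion_lambda (qhat q c : ℝ)
    (hqhat : 0 ≤ qhat) (hle : qhat ≤ q) (hq1 : q < 1) (hc : 0 ≤ c)
    (h : klBin qhat q ≤ c)
    (lam : ℝ) (hlam0 : 0 < lam) (hlam2 : lam < 2) :
    q ≤ qhat / (1 - lam / 2) + c / (lam * (1 - lam / 2)) := by
  have key : (q - qhat) ^ 2 ≤ 2 * q * c := by
    have := kl_lower qhat q hqhat hle hq1
    nlinarith [le_trans hle hq1.le, le_trans hqhat hle]
  have h2 : 1 - lam / 2 > 0 := by linarith
  have hq0 : 0 ≤ q := le_trans hqhat hle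
  have hstep : q - qhat ≤ lam * q / 2 + c / lam := by
    nlinarith [sq_nonneg (lam * q / 2 - c / lam), mul_pos hlam0 h2,
      div_nonneg hc hlam0.le, mul_nonneg hlam0.le hq0,
      mul_div_cancel₀ c hlam0.ne']
  rw [div_add_div _ _ (ne_of_gt h2) (ne_of_gt (mul_pos hlam0 h2)),
    le_div_iff₀ (by positivity)]
  have : c / lam * lam = c := div_mul_cancel₀ c hlam0.ne'
  nlinarith [hstep, mul_pos hlam0 h2]
end
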